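/- For complex q with |q| < 1 and positive integer k, the Lambert-type series identity holds: ∑_{n=1}^∞ σ^#_{2k-1}(n) q^n = ∑_{i=0}^∞ Q(q^{2i+1})/(1-q^{2i+1})^{2k}, where Q(z) = ∑_{j=0}^{2k-1} j! · S(2k-1,j) · z^j (1-z)^{2k-j-1} and σ^#_m(n) = ∑_{d|n, n/d odd} d^m. -/

import Mathlib

/-- Stirling numbers of the second kind. -/
def stirling2 : ℕ → ℕ → ℕ
  | 0, 0 => 0 + 1
  | 0, _ + 1 => 0
  | _ + 1, 0 => 0
  | n + 1, k + 1 => (k + 1) * stirling2 n (k + 1) + stirling2 n k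

/-- Modified divisor sum: sum of `d ^ m` over divisors `d` of `n` with `n / d` odd. -/
def sigmaHash (m n : ℕ) : ℕ := ∑ d ∈ n.divisors.filter (fun d => Odd (n / d)), d ^ m

lemma stirling2_eq_zero : ∀ {n k : ℕ}, n < k → stirling2 n k = 0
  | 0, _+1, _ => rfl
  | n+1, k+1, h => by
    show (k+1) * stirling2 n (k+1) + stirling2 n k = 0
    rw [stirling2_eq_zero (by omega : n < k+1), stirling2_eq_zero (by omega : n < k)]
    simp

lemma mul_descFactorial (n j : ℕ) :
    n * n.descFactorial j = n.descFactorial (j+1) + j * n.descFactorial j := by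
  rcases le_or_gt j n with h | h
  · obtain ⟨c, rfl⟩ := Nat.exists_eq_add_of_le h
    rw [Nat.descFactorial_succ, Nat.add_sub_cancel_left]
    ring
  · rw [Nat.descFactorial_of_lt h, Nat.descFactorial_of_lt (by omega)]
    simp

lemma pow_eq_sum_stirling (m n : ℕ) :
    n ^ m = ∑ j ∈ Finset.range (m+1), stirling2 m j * n.descFactorial j := by
  induction m with
  | zero => simp [stirling2]
  | succ m ih =>
    have hrec : ∀ j : ℕ, stirling2 (m+1) (j+1) = (j+1) * stirling2 m (j+1) + stirling2 m j :=
      fun j => rfl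
    rw [Finset.sum_range_succ' _ (m+1)]
    have h0 : stirling2 (m+1) 0 = 0 := rfl
    rw [h0]
    rw [zero_mul, add_zero]
    have step : ∑ j ∈ Finset.range (m+1), stirling2 (m+1) (j+1) * Nat.descFactorial n (j+1)
        = ∑ j ∈ Finset.range (m+1), ((j+1) * stirling2 m (j+1) * Nat.descFactorial n (j+1)
            + stirling2 m j * Nat.descFactorial n (j+1)) := by
      refine Finset.sum_congr rfl fun j _ => ?_
      rw [hrec, add_mul]
    rw [step, Finset.sum_add_distrib]
    have hA : ∑ j ∈ Finset.range (m+1), (j+1) * stirling2 m (j+1) * Nat.descFactorial n (j+1)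
        = ∑ j ∈ Finset.range (m+1), j * stirling2 m j * Nat.descFactorial n j := by
      rw [Finset.sum_range_succ, stirling2_eq_zero (by omega), Finset.sum_range_succ' _ m]
      simp
    rw [hA, ← Finset.sum_add_distrib, pow_succ, ih, Finset.sum_mul]
    apply Finset.sum_congr rfl
    intro j _
    rw [mul_assoc, mul_comm (Nat.descFactorial n j) n, mul_descFactorial]
    ring

lemma hasSum_choose_geom (j : ℕ) {z : ℂ} (hz : ‖z‖ < 1) :
    HasSum (fun d : ℕ => ((d.choose j : ℕ) : ℂ) * z ^ d) (z ^ j / (1-z)^(j+1)) := by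
  have h1 := (hasSum_choose_mul_geometric_of_norm_lt_one j hz).mul_left (z ^ j)
  have h2 : HasSum (fun n : ℕ => (((n+j).choose j : ℕ) : ℂ) * z ^ (n + j))
      (z ^ j / (1-z)^(j+1)) := by
    rw [div_eq_mul_one_div]
    convert h1 using 1
    · rfl
    funext n; rw [pow_add]; ring
  have h4 := (hasSum_nat_add_iff (f := fun d : ℕ => ((d.choose j : ℕ) : ℂ) * z ^ d) j).mp h2
  have h3 : ∑ i ∈ Finset.range j, ((i.choose j : ℕ) : ℂ) * z ^ i = 0 := by
    apply Finset.sum_eq_zero; intro i hi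
    rw [Nat.choose_eq_zero_of_lt (Finset.mem_range.1 hi)]; simp
  rwa [h3, add_zero] at h4

lemma hasSum_pow_geom (m : ℕ) {z : ℂ} (hz : ‖z‖ < 1) :
    HasSum (fun d : ℕ => (d : ℂ) ^ m * z ^ d)
      (∑ j ∈ Finset.range (m+1),
        (j.factorial : ℂ) * (stirling2 m j : ℂ) * (z ^ j / (1-z)^(j+1))) := by
  have h := hasSum_sum (s := Finset.range (m+1))
      (f := fun j (d : ℕ) =>
        (j.factorial : ℂ) * (stirling2 m j : ℂ) * (((d.choose j : ℕ) : ℂ) * z ^ d))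
      (a := fun j => (j.factorial : ℂ) * (stirling2 m j : ℂ) * (z ^ j / (1-z)^(j+1)))
      (fun j _ => (hasSum_choose_geom j hz).mul_left _)
  convert h using 1
  funext d
  have hd : ((d : ℂ)) ^ m
      = ∑ j ∈ Finset.range (m+1), (j.factorial : ℂ) * (stirling2 m j : ℂ) * (d.choose j : ℂ) := by
    calc ((d:ℂ))^m = ((d ^ m : ℕ) : ℂ) := by push_cast; ring
    _ = _ := by
        rw [pow_eq_sum_stirling m d]
        push_cast
        apply Finset.sum_congr rfl; intro j _
        rw [Nat.descFactorial_eq_factorial_mul_choose]; push_cast; ring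
  rw [hd, Finset.sum_mul]
  apply Finset.sum_congr rfl; intro j _; ring

noncomputable def Fq (m : ℕ) (q : ℂ) : ℕ × ℕ → ℂ :=
  fun p => ((p.2 + 1 : ℕ) : ℂ) ^ m * q ^ ((p.2 + 1) * (2 * p.1 + 1))

lemma summableF (m : ℕ) {q : ℂ} (hq : ‖q‖ < 1) : Summable (Fq m q) := by
  set r := ‖q‖ with hr
  have hr0 : 0 ≤ r := norm_nonneg q
  have hg : Summable (fun d : ℕ => ((d + 1 : ℕ) : ℝ) ^ m * r ^ (d + 1)) := by
    have h1 : Summable (fun n : ℕ => (n : ℝ) ^ m * r ^ n) :=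
      summable_pow_mul_geometric_of_norm_lt_one m
        (by rwa [Real.norm_eq_abs, abs_of_nonneg hr0])
    exact (summable_nat_add_iff (f := fun n : ℕ => (n : ℝ) ^ m * r ^ n) 1).2 h1
  have hh : Summable (fun i : ℕ => (r ^ 2) ^ i) :=
    summable_geometric_of_lt_one (by positivity) (by nlinarith)
  have hprod := hh.mul_of_nonneg hg (fun i => by positivity) (fun d => by positivity)
  apply Summable.of_norm
  apply Summable.of_nonneg_of_le (fun p => norm_nonneg _) _ hprod
  rintro ⟨i, d⟩
  have hnorm : ‖Fq m q (i, d)‖ = ((d + 1 : ℕ) : ℝ) ^ m * r ^ ((d + 1) * (2 * i + 1)) := by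
    rw [show Fq m q (i, d) = ((d + 1 : ℕ) : ℂ) ^ m * q ^ ((d + 1) * (2 * i + 1)) from rfl,
      norm_mul, norm_pow, norm_pow, hr]
    have hcast : ‖((d + 1 : ℕ) : ℂ)‖ = ((d + 1 : ℕ) : ℝ) := by
      rw [show ((d + 1 : ℕ) : ℂ) = ((((d + 1 : ℕ) : ℝ)) : ℂ) by push_cast; ring,
        Complex.norm_real, Real.norm_eq_abs, abs_of_nonneg (by positivity)]
    rw [hcast]
  rw [hnorm]
  have hle : r ^ ((d + 1) * (2 * i + 1)) ≤ r ^ (d + 1 + 2 * i) :=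
    pow_le_pow_of_le_one hr0 hq.le (by nlinarith)
  calc ((d + 1 : ℕ) : ℝ) ^ m * r ^ ((d + 1) * (2 * i + 1))
      ≤ ((d + 1 : ℕ) : ℝ) ^ m * r ^ (d + 1 + 2 * i) := by
        apply mul_le_mul_of_nonneg_left hle (by positivity)
    _ = (r ^ 2) ^ i * (((d + 1 : ℕ) : ℝ) ^ m * r ^ (d + 1)) := by
        rw [pow_add, ← pow_mul]; ring

lemma fiber_sum (m n : ℕ) (q : ℂ) :
    ∑' p : ((fun p : ℕ × ℕ => (p.2 + 1) * (2 * p.1 + 1) - 1) ⁻¹' {n}), Fq m q p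
      = (sigmaHash m (n + 1) : ℂ) * q ^ (n + 1) := by
  classical
  have hmem : ∀ p : ℕ × ℕ, (p.2 + 1) * (2 * p.1 + 1) - 1 = n ↔
      (p.2 + 1) * (2 * p.1 + 1) = n + 1 := by
    intro p
    have h1 : 1 ≤ (p.2 + 1) * (2 * p.1 + 1) := Nat.one_le_iff_ne_zero.2 (by positivity)
    omega
  have hset : ((fun p : ℕ × ℕ => (p.2 + 1) * (2 * p.1 + 1) - 1) ⁻¹' {n})
      = ↑((Finset.range (n + 1) ×ˢ Finset.range (n + 1)).filter
          (fun p => (p.2 + 1) * (2 * p.1 + 1) = n + 1)) := by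
    ext p
    simp only [Set.mem_preimage, Set.mem_singleton_iff, Finset.coe_filter, Set.mem_setOf_eq,
      Finset.mem_product, Finset.mem_range]
    constructor
    · intro h
      have h2 := (hmem p).1 h
      have hd : p.2 + 1 ≤ n + 1 := Nat.le_of_dvd (by omega) ⟨2 * p.1 + 1, h2.symm⟩
      have hi : 2 * p.1 + 1 ≤ n + 1 := Nat.le_of_dvd (by omega) ⟨p.2 + 1, by rw [← h2]; ring⟩
      exact ⟨⟨by omega, by omega⟩, h2⟩
    · intro h
      exact (hmem p).2 h.2
  rw [hset, Finset.tsum_subtype']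
  have hrhs : (sigmaHash m (n + 1) : ℂ) * q ^ (n + 1)
      = ∑ d ∈ (n + 1).divisors.filter (fun d => Odd ((n + 1) / d)), (d : ℂ) ^ m * q ^ (n + 1) := by
    rw [sigmaHash]; push_cast; rw [Finset.sum_mul]
  rw [hrhs]
  refine Finset.sum_nbij' (i := fun p : ℕ × ℕ => p.2 + 1)
    (j := fun d => (((n + 1) / d - 1) / 2, d - 1)) ?_ ?_ ?_ ?_ ?_
  · rintro ⟨a, b⟩ hp
    simp only [Finset.mem_filter, Finset.mem_product, Finset.mem_range] at hp
    obtain ⟨-, h2⟩ := hp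
    have hquot : (n + 1) / (b + 1) = 2 * a + 1 := by
      rw [← h2, Nat.mul_div_cancel_left _ (by omega)]
    refine Finset.mem_filter.2 ⟨Nat.mem_divisors.2 ⟨⟨2 * a + 1, h2.symm⟩, by omega⟩, ?_⟩
    rw [hquot]; exact ⟨a, by ring⟩
  · intro d hd
    simp only [Finset.mem_filter, Nat.mem_divisors] at hd
    obtain ⟨⟨⟨e, he⟩, -⟩, hodd⟩ := hd
    obtain ⟨c, hc⟩ := hodd
    have hd1 : 1 ≤ d := by
      rcases Nat.eq_zero_or_pos d with h | h
      · subst h; simp at he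
      · exact h
    have hquot : (n + 1) / d = e := by rw [he, Nat.mul_div_cancel_left _ (by omega)]
    have he2 : e = 2 * c + 1 := by rw [← hquot, hc]
    have hprodeq : (d - 1 + 1) * (2 * (((n + 1) / d - 1) / 2) + 1) = n + 1 := by
      rw [hquot, he2]
      have : (2 * c + 1 - 1) / 2 = c := by omega
      rw [this, Nat.sub_add_cancel hd1, he, he2]

    have hdn : d ≤ n + 1 := Nat.le_of_dvd (by omega) ⟨e, he⟩
    have hcn : 2 * c + 1 ≤ n + 1 := Nat.le_of_dvd (by omega) ⟨d, by rw [he, he2]; ring⟩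
    refine Finset.mem_filter.2 ⟨Finset.mem_product.2 ⟨?_, ?_⟩, hprodeq⟩
    · simp only [Finset.mem_range, hquot, he2]
      omega
    · simp only [Finset.mem_range]; omega
  · rintro ⟨a, b⟩ hp
    simp only [Finset.mem_filter, Finset.mem_product, Finset.mem_range] at hp
    obtain ⟨-, h2⟩ := hp
    have hquot : (n + 1) / (b + 1) = 2 * a + 1 := by
      rw [← h2, Nat.mul_div_cancel_left _ (by omega)]
    simp only [hquot, Nat.add_sub_cancel]
    have h3 : 2 * a / 2 = a := by omega
    rw [h3]
  · intro d hd
    simp only [Finset.mem_filter, Nat.mem_divisors] at hd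
    have hd1 : 1 ≤ d := Nat.pos_of_mem_divisors (Nat.mem_divisors.2 hd.1)
    simp only [Nat.sub_add_cancel hd1]
  · rintro ⟨a, b⟩ hp
    simp only [Finset.mem_filter, Finset.mem_product, Finset.mem_range] at hp
    obtain ⟨-, h2⟩ := hp
    simp only [Fq, h2]

theorem stmt_12 (k : ℕ) (hk : 1 ≤ k) (q : ℂ) (hq : ‖q‖ < 1)
    (Q : ℂ → ℂ)
    (hQ : ∀ z : ℂ, Q z = ∑ j ∈ Finset.range (2 * k), (j.factorial : ℂ) *
        (stirling2 (2 * k - 1) j : ℂ) * z ^ j * (1 - z) ^ (2 * k - j - 1)) :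
    ∑' n : ℕ, (sigmaHash (2 * k - 1) (n + 1) : ℂ) * q ^ (n + 1) =
      ∑' i : ℕ, Q (q ^ (2 * i + 1)) / (1 - q ^ (2 * i + 1)) ^ (2 * k) := by
  have hm1 : 2 * k - 1 + 1 = 2 * k := by omega
  set m := 2 * k - 1 with hmdef
  have hm0 : m ≠ 0 := by omega
  have hF : Summable (Fq m q) := summableF m hq
  have h1 : HasSum (fun n : ℕ => (sigmaHash m (n + 1) : ℂ) * q ^ (n + 1)) (∑' p, Fq m q p) := by
    have h2 := hF.hasSum.tsum_fiberwise (fun p : ℕ × ℕ => (p.2 + 1) * (2 * p.1 + 1) - 1)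
    have h3 : (fun n : ℕ => ∑' p : ((fun p : ℕ × ℕ => (p.2 + 1) * (2 * p.1 + 1) - 1) ⁻¹' {n}),
        Fq m q p) = fun n : ℕ => (sigmaHash m (n + 1) : ℂ) * q ^ (n + 1) := by
      funext n; exact fiber_sum m n q
    rwa [h3] at h2
  rw [h1.tsum_eq, Summable.tsum_prod' hF (fun i => hF.prod_factor i)]
  apply tsum_congr
  intro i
  set z := q ^ (2 * i + 1) with hz
  have hznorm : ‖z‖ < 1 := by
    rw [hz, norm_pow]
    calc ‖q‖ ^ (2 * i + 1) ≤ ‖q‖ ^ 1 := pow_le_pow_of_le_one (norm_nonneg q) hq.le (by omega)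
    _ = ‖q‖ := pow_one _
    _ < 1 := hq
  have hne : (1 : ℂ) - z ≠ 0 := by
    intro h
    rw [sub_eq_zero] at h
    rw [← h] at hznorm
    simp at hznorm
  have hs2 : HasSum (fun d : ℕ => ((d + 1 : ℕ) : ℂ) ^ m * z ^ (d + 1))
      (∑ j ∈ Finset.range (m + 1),
        (j.factorial : ℂ) * (stirling2 m j : ℂ) * (z ^ j / (1 - z) ^ (j + 1))) := by
    apply (hasSum_nat_add_iff (f := fun d : ℕ => (d : ℂ) ^ m * z ^ d) 1).mpr
    have heq0 : (∑ j ∈ Finset.range (m + 1),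
        (j.factorial : ℂ) * (stirling2 m j : ℂ) * (z ^ j / (1 - z) ^ (j + 1)))
        + ∑ i ∈ Finset.range 1, (i : ℂ) ^ m * z ^ i
        = ∑ j ∈ Finset.range (m + 1),
        (j.factorial : ℂ) * (stirling2 m j : ℂ) * (z ^ j / (1 - z) ^ (j + 1)) := by
      simp [zero_pow hm0]
    rw [heq0]
    exact hasSum_pow_geom m hznorm
  have hinner : ∑' d : ℕ, Fq m q (i, d)
      = ∑ j ∈ Finset.range (m + 1),
        (j.factorial : ℂ) * (stirling2 m j : ℂ) * (z ^ j / (1 - z) ^ (j + 1)) := by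
    have heq : (fun d : ℕ => Fq m q (i, d))
        = fun d : ℕ => ((d + 1 : ℕ) : ℂ) ^ m * z ^ (d + 1) := by
      funext d
      show ((d + 1 : ℕ) : ℂ) ^ m * q ^ ((d + 1) * (2 * i + 1)) = _
      rw [hz, ← pow_mul, mul_comm (2 * i + 1)]
    rw [heq, hs2.tsum_eq]
  rw [hinner, hQ z, Finset.sum_div, hm1]
  apply Finset.sum_congr rfl
  intro j hj
  have hjlt : j < 2 * k := Finset.mem_range.1 hj
  have hpow : (1 - z) ^ (2 * k) = (1 - z) ^ (2 * k - j - 1) * (1 - z) ^ (j + 1) := by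
    rw [← pow_add]; congr 1; omega
  rw [hpow]
  field_simp
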